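/- arXiv:1802.03488 — 3 statements merged into one kernel-verified Lean document; each statement's English description precedes it below -/
import Mathlib

section
/- Let X₁, X₂ ⊆ ℝ^n be finite with C(X₁) ∩ X₂ = ∅, and let X₂ = ⋃_{j=1}^{L₂} X₂ʲ with C(X₁) ∩ C(X₂ʲ) = ∅ for each j. Suppose wⱼᵀx + bⱼ are linear classifiers with wⱼᵀx + bⱼ ≤ 0 for all x ∈ X₁ and wⱼᵀx + bⱼ > 0 for all x ∈ X₂ʲ. Let f : ℝ → ℝ be semi-positive (f(x) = 0 for x ≤ 0 and f(x) > 0 for x > 0), applied componentwise, W = [w₁,…,w_{L₂}], b = (b₁,…,b_{L₂}), and Z_k = { f(Wᵀx + b) : x ∈ X_k }. Then C(Z₁) ∩ C(Z₂) = ∅, i.e., Z₁ and Z₂ are linearly separable. -/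
open Set

theorem stmt_2 (n L₂ : ℕ) (X₁ X₂ : Set (Fin n → ℝ)) (hX₁ : X₁.Finite) (hX₂ : X₂.Finite)
    (X₂p : Fin L₂ → Set (Fin n → ℝ)) (hcover : X₂ = ⋃ j, X₂p j)
    (hdisj : Disjoint (convexHull ℝ X₁) X₂)
    (hdisjp : ∀ j, Disjoint (convexHull ℝ X₁) (convexHull ℝ (X₂p j)))
    (w : Fin L₂ → (Fin n → ℝ)) (b : Fin L₂ → ℝ)
    (hcl₁ : ∀ j, ∀ x ∈ X₁, ∑ i, w j i * x i + b j ≤ 0)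
    (hcl₂ : ∀ j, ∀ x ∈ X₂p j, 0 < ∑ i, w j i * x i + b j)
    (f : ℝ → ℝ) (hf₀ : ∀ x ≤ 0, f x = 0) (hf₁ : ∀ x, 0 < x → 0 < f x)
    (Z₁ Z₂ : Set (Fin L₂ → ℝ))
    (hZ₁ : Z₁ = (fun x => fun j => f (∑ i, w j i * x i + b j)) '' X₁)
    (hZ₂ : Z₂ = (fun x => fun j => f (∑ i, w j i * x i + b j)) '' X₂) :
    Disjoint (convexHull ℝ Z₁) (convexHull ℝ Z₂) := by
  have hlin : IsLinearMap ℝ (fun z : Fin L₂ → ℝ => ∑ j, z j) :=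
    ⟨fun a c => Finset.sum_add_distrib, fun c a => by simp [Finset.mul_sum]⟩
  have hfnn : ∀ t : ℝ, 0 ≤ f t := by
    intro t
    rcases le_or_gt t 0 with h | h
    · rw [hf₀ t h]
    · exact (hf₁ t h).le
  have h1 : convexHull ℝ Z₁ ⊆ {z | ∑ j, z j ≤ 0} := by
    apply convexHull_min _ (convex_halfSpace_le hlin 0)
    rintro z hz
    rw [hZ₁] at hz
    obtain ⟨x, hx, rfl⟩ := hz
    have : ∀ j, f (∑ i, w j i * x i + b j) = 0 := fun j => hf₀ _ (hcl₁ j x hx)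
    simp [this]
  have h2 : convexHull ℝ Z₂ ⊆ {z | 0 < ∑ j, z j} := by
    apply convexHull_min _ (convex_halfSpace_gt hlin 0)
    rintro z hz
    rw [hZ₂] at hz
    obtain ⟨x, hx, rfl⟩ := hz
    rw [hcover] at hx
    obtain ⟨j₀, hj₀⟩ := Set.mem_iUnion.mp hx
    exact Finset.sum_pos' (fun j _ => hfnn _)
      ⟨j₀, Finset.mem_univ j₀, hf₁ _ (hcl₂ j₀ x hj₀)⟩
  rw [Set.disjoint_left]
  intro z hz1 hz2
  exact absurd (h2 hz2) (not_lt.mpr (h1 hz1) : ¬ (0:ℝ) < ∑ j, z j)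
end

section
/- Let X₁, X₂ ⊆ ℝ^n be finite with disjoint convex hull decompositions X₁ = ⋃_{i=1}^{L₁} X₁ⁱ, X₂ = ⋃_{j=1}^{L₂} X₂ʲ where C(X₁ⁱ) ∩ C(X₂ʲ) = ∅ for all i, j. Suppose for all i, j there are classifiers with w_{ij}ᵀx + b_{ij} ≤ 0 on X₁ⁱ and > 0 on X₂ʲ. Let f be semi-positive applied componentwise, W the concatenation of all w_{ij}, b of all b_{ij}, and Z_k = { f(Wᵀx + b) : x ∈ X_k }. Then Z₁ ∩ C(Z₂) = ∅, i.e., Z₁ and Z₂ are convexly separable. -/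
open Set

theorem stmt_5 (n L₁ L₂ : ℕ) (X₁ X₂ : Set (Fin n → ℝ)) (hX₁ : X₁.Finite) (hX₂ : X₂.Finite)
    (X₁p : Fin L₁ → Set (Fin n → ℝ)) (X₂p : Fin L₂ → Set (Fin n → ℝ))
    (hcover₁ : X₁ = ⋃ i, X₁p i) (hcover₂ : X₂ = ⋃ j, X₂p j)
    (hdisjp : ∀ i j, Disjoint (convexHull ℝ (X₁p i)) (convexHull ℝ (X₂p j)))
    (w : Fin L₁ → Fin L₂ → (Fin n → ℝ)) (b : Fin L₁ → Fin L₂ → ℝ)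
    (hcl₁ : ∀ i j, ∀ x ∈ X₁p i, ∑ k, w i j k * x k + b i j ≤ 0)
    (hcl₂ : ∀ i j, ∀ x ∈ X₂p j, 0 < ∑ k, w i j k * x k + b i j)
    (f : ℝ → ℝ) (hf₀ : ∀ x ≤ 0, f x = 0) (hf₁ : ∀ x, 0 < x → 0 < f x)
    (Z₁ Z₂ : Set (Fin L₁ × Fin L₂ → ℝ))
    (hZ₁ : Z₁ = (fun x => fun p => f (∑ k, w p.1 p.2 k * x k + b p.1 p.2)) '' X₁)
    (hZ₂ : Z₂ = (fun x => fun p => f (∑ k, w p.1 p.2 k * x k + b p.1 p.2)) '' X₂) :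
    Disjoint Z₁ (convexHull ℝ Z₂) := by
  have hfnn : ∀ x : ℝ, 0 ≤ f x := by
    intro x
    rcases le_or_gt x 0 with h | h
    · rw [hf₀ x h]
    · exact (hf₁ x h).le
  rw [disjoint_left]
  rintro z hz hz'
  rw [hZ₁] at hz
  obtain ⟨x, hx, rfl⟩ := hz
  rw [hcover₁] at hx
  obtain ⟨i, hi⟩ := mem_iUnion.mp hx
  set S : Set (Fin L₁ × Fin L₂ → ℝ) := {v | 0 < ∑ j, v (i, j)} with hS
  have hlin : IsLinearMap ℝ (fun v : Fin L₁ × Fin L₂ → ℝ => ∑ j, v (i, j)) := by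
    constructor
    · intro u v; simp [Finset.sum_add_distrib]
    · intro c v; simp [Finset.mul_sum]
  have hconv : Convex ℝ S := convex_halfSpace_gt hlin 0
  have hsub : Z₂ ⊆ S := by
    rw [hZ₂]
    rintro _ ⟨y, hy, rfl⟩
    rw [hcover₂] at hy
    obtain ⟨j₀, hj₀⟩ := mem_iUnion.mp hy
    have : (0:ℝ) < ∑ j, f (∑ k, w i j k * y k + b i j) := by
      apply Finset.sum_pos' (fun j _ => hfnn _)
      exact ⟨j₀, Finset.mem_univ _, hf₁ _ (hcl₂ i j₀ y hj₀)⟩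
    simpa [hS] using this
  have hzS := convexHull_min hsub hconv hz'
  have hzero : ∑ j, (fun p : Fin L₁ × Fin L₂ => f (∑ k, w p.1 p.2 k * x k + b p.1 p.2)) (i, j) = 0 := by
    apply Finset.sum_eq_zero
    intro j _
    exact hf₀ _ (hcl₁ i j x hi)
  rw [hS, mem_setOf_eq] at hzS
  exact lt_irrefl 0 (hzero ▸ hzS)
end

section
/- Let f(x) = c₁x for x ≤ 0 and f(x) = c₂x for x ≥ 0 with 0 < c₁ < c₂ (a leaky ReLU). For fixed δ > 0 and D > 0, the infimum over x₀ ∈ ℝ of the quantity (f(x₀) − f(x₀ − D)) / (f(x₀ + δ) − f(x₀ − D)) is attained at x₀ = 0, where it equals c₁D / (c₂δ + c₁D). -/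
open Set

theorem stmt_7 (c₁ c₂ δ D : ℝ) (hc₁ : 0 < c₁) (hc : c₁ < c₂) (hδ : 0 < δ) (hD : 0 < D)
    (f : ℝ → ℝ) (hf : ∀ x, f x = if x ≤ 0 then c₁ * x else c₂ * x) :
    (∀ x₀ : ℝ, (f 0 - f (0 - D)) / (f (0 + δ) - f (0 - D)) ≤
        (f x₀ - f (x₀ - D)) / (f (x₀ + δ) - f (x₀ - D))) ∧
      (f 0 - f (0 - D)) / (f (0 + δ) - f (0 - D)) = c₁ * D / (c₂ * δ + c₁ * D) := by
  have h0 : f 0 = 0 := by simp [hf]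
  have hmD : f (0 - D) = c₁ * (0 - D) := by
    rw [hf]; rw [if_pos (by linarith)]
  have hpδ : f (0 + δ) = c₂ * (0 + δ) := by
    rw [hf]; rw [if_neg (by push_neg; linarith)]
  have hval : (f 0 - f (0 - D)) / (f (0 + δ) - f (0 - D)) = c₁ * D / (c₂ * δ + c₁ * D) := by
    rw [h0, hmD, hpδ]; ring_nf
  have hlow : ∀ u v : ℝ, u ≤ v → c₁ * (v - u) ≤ f v - f u := by
    intro u v huv
    rw [hf, hf]
    split_ifs with h1 h2 h2 <;> nlinarith [hc.le]
  have hup : ∀ u v : ℝ, u ≤ v → f v - f u ≤ c₂ * (v - u) := by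
    intro u v huv
    rw [hf, hf]
    split_ifs with h1 h2 h2 <;> nlinarith [hc.le]
  refine ⟨fun x₀ => ?_, hval⟩
  rw [hval]
  have hA : c₁ * D ≤ f x₀ - f (x₀ - D) := by
    have := hlow (x₀ - D) x₀ (by linarith)
    linarith [this]
  have hBu : f (x₀ + δ) - f x₀ ≤ c₂ * δ := by
    have := hup x₀ (x₀ + δ) (by linarith)
    linarith [this]
  have hBl : c₁ * δ ≤ f (x₀ + δ) - f x₀ := by
    have := hlow x₀ (x₀ + δ) (by linarith)
    linarith [this]
  have hden : 0 < f (x₀ + δ) - f (x₀ - D) := by nlinarith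
  rw [div_le_div_iff₀ (by nlinarith) hden]
  nlinarith [mul_pos hc₁ hD, mul_pos (hc₁.trans hc) hδ]
end
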